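/- Define X₊: M → S ⊂ C³ by the explicit formula ᵗX₊(u,v) = (csc 2u / (2√(1+cos²u))) · A · (e^v(3 + 2√2 cos²u + e^{−2iu}), e^{−v}(3 − 2√2 cos²u + e^{2iu}), 4cos³u + 2√2 i sin u), where A is the matrix [[1,1,1],[0,1,1],[1,0,1]] and S = {(u₀,u₁,u₂) ∈ C³ : −|u₀|² + |u₁|² + |u₂|² = −1}. Then X₊ actually takes values in S, i.e., −|X₊⁰|² + |X₊¹|² + |X₊²|² = −1 for all (u,v) ∈ (0, π/2) × R. -/

import Mathlib

open Real Complex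

/- STATEMENT 14: Hirakawa's map X₊ takes values in
   S = {(u₀,u₁,u₂) ∈ ℂ³ : −|u₀|² + |u₁|² + |u₂|² = −1}. -/
set_option maxHeartbeats 1000000 in
theorem stmt_14 :
    ∀ u ∈ Set.Ioo (0 : ℝ) (Real.pi / 2), ∀ v : ℝ,
      let c : ℝ := (1 / Real.sin (2 * u)) / (2 * Real.sqrt (1 + Real.cos u ^ 2));
      let w0 : ℂ := (Real.exp v : ℝ) *
        ((3 : ℂ) + (2 * Real.sqrt 2 * Real.cos u ^ 2 : ℝ) + Complex.exp (-2 * Complex.I * (u : ℂ)));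
      let w1 : ℂ := (Real.exp (-v) : ℝ) *
        ((3 : ℂ) - (2 * Real.sqrt 2 * Real.cos u ^ 2 : ℝ) + Complex.exp (2 * Complex.I * (u : ℂ)));
      let w2 : ℂ := (4 * Real.cos u ^ 3 : ℝ) + (2 * Real.sqrt 2 : ℝ) * Complex.I * (Real.sin u : ℝ);
      -- X₊ = c · A · (w0, w1, w2) with A = [[1,1,1],[0,1,1],[1,0,1]]
      let X0 : ℂ := (c : ℝ) * (w0 + w1 + w2);
      let X1 : ℂ := (c : ℝ) * (w1 + w2);
      let X2 : ℂ := (c : ℝ) * (w0 + w2);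
      -(‖X0‖) ^ 2 + (‖X1‖) ^ 2 + (‖X2‖) ^ 2 = -1 := by
  intro u hu v c w0 w1 w2 X0 X1 X2
  obtain ⟨hu0, hu1⟩ := hu
  have hpi := Real.pi_pos
  have hs : 0 < Real.sin u := Real.sin_pos_of_pos_of_lt_pi hu0 (by linarith)
  have hc : 0 < Real.cos u := Real.cos_pos_of_mem_Ioo ⟨by linarith, hu1⟩
  have hqq : Real.sqrt (1 + Real.cos u ^ 2) ^ 2 = 1 + Real.cos u ^ 2 :=
    Real.sq_sqrt (by positivity)
  have hq : (0:ℝ) < Real.sqrt (1 + Real.cos u ^ 2) := by positivity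
  have ht : Real.sqrt 2 ^ 2 = 2 := Real.sq_sqrt (by norm_num)
  have hE : Real.exp v * Real.exp (-v) = 1 := by rw [← Real.exp_add]; simp
  have hpyth : Real.sin u ^ 2 = 1 - Real.cos u ^ 2 := Real.sin_sq u
  have hR : -Complex.normSq (w0 + w1 + w2) + Complex.normSq (w1 + w2)
        + Complex.normSq (w0 + w2)
      = -(16 * Real.sin u ^ 2 * Real.cos u ^ 2 * (1 + Real.cos u ^ 2)) := by
    simp only [w0, w1, w2, Complex.normSq_apply, Complex.add_re, Complex.add_im,
      Complex.mul_re, Complex.mul_im, Complex.ofReal_re, Complex.ofReal_im,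
      Complex.I_re, Complex.I_im, Complex.exp_re, Complex.exp_im,
      Complex.neg_re, Complex.neg_im, Complex.sub_re, Complex.sub_im,
      Complex.re_ofNat, Complex.im_ofNat]
    norm_num [Real.exp_zero, Real.sin_neg, Real.cos_neg]
    rw [Real.cos_two_mul, Real.sin_two_mul]
    linear_combination
      (-2*((2+2*Real.cos u^2)^2 - 4*(Real.sqrt 2)^2*Real.cos u^4
        - 4*Real.sin u^2*Real.cos u^2)) * hE
      + (4*Real.sin u^2 + 8*Real.cos u^4) * ht
      + (8 + 24*Real.cos u^2 + 16*Real.cos u^4) * hpyth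
  have hfac : ∀ z : ℂ, (‖(c:ℝ) * z‖) ^ 2 = c ^ 2 * Complex.normSq z := by
    intro z
    rw [Complex.sq_norm, Complex.normSq_mul, Complex.normSq_ofReal]
    ring
  simp only [X0, X1, X2, hfac]
  rw [show -(c ^ 2 * Complex.normSq (w0 + w1 + w2)) + c ^ 2 * Complex.normSq (w1 + w2)
      + c ^ 2 * Complex.normSq (w0 + w2)
      = c ^ 2 * (-Complex.normSq (w0 + w1 + w2) + Complex.normSq (w1 + w2)
        + Complex.normSq (w0 + w2)) by ring, hR]
  simp only [c, Real.sin_two_mul]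
  field_simp
  linear_combination 16 * hqq
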